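/- Let n be a positive integer, let T > 0 be a real number and let λ be a real number with 0 < λ < T. Let f : ℝ → ℝ be nonnegative and concave on the open interval (0,T). Then ∫_0^λ f(x)^n dx ≥ f(λ)^n · λ/(n+1). -/

import Mathlib

open MeasureTheory Set

/-- First displayed inequality in the proof of Lemma 4.10:
`∫_0^λ f^n ≥ f(λ)^n · λ/(n+1)`. -/
theorem concave_integral_pow_left_bound
    (n : ℕ) (hn : 0 < n) (T lam : ℝ) (hT : 0 < T) (hlam : 0 < lam) (hlamT : lam < T)
    (f : ℝ → ℝ) (hconc : ConcaveOn ℝ (Set.Ioo 0 T) f)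
    (hnonneg : ∀ x ∈ Set.Ioo 0 T, 0 ≤ f x) :
    f lam ^ n * lam / ((n : ℝ) + 1) ≤ ∫ x in (0:ℝ)..lam, f x ^ n := by
  have hlamIn : lam ∈ Set.Ioo (0:ℝ) T := ⟨hlam, hlamT⟩
  have hfl : 0 ≤ f lam := hnonneg lam hlamIn
  -- pointwise lower bound on Ioc 0 lam
  have key : ∀ x ∈ Set.Ioc (0:ℝ) lam, f lam ^ n / lam ^ n * x ^ n ≤ f x ^ n := by
    intro x hx
    have hfx : f lam * (x / lam) ≤ f x := by
      rcases hx.2.eq_or_lt with heq | hxl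
      · subst heq
        rw [div_self hlam.ne']
        simp
      · have h1 : ∀ᶠ ε in nhdsWithin 0 (Set.Ioi (0:ℝ)),
            f lam * ((x - ε) / (lam - ε)) ≤ f x := by
          filter_upwards [Ioo_mem_nhdsGT_of_mem ⟨le_refl (0:ℝ), hx.1⟩] with ε hε
          obtain ⟨hε0, hεx⟩ := hε
          have hεT : ε ∈ Set.Ioo (0:ℝ) T := ⟨hε0, by linarith⟩
          have hd : (0:ℝ) < lam - ε := by linarith
          have ha : 0 ≤ (lam - x) / (lam - ε) := div_nonneg (by linarith) hd.le
          have hb : 0 ≤ (x - ε) / (lam - ε) := div_nonneg (by linarith) hd.le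
          have hab : (lam - x) / (lam - ε) + (x - ε) / (lam - ε) = 1 := by
            field_simp; ring
          have hne : lam - ε ≠ 0 := hd.ne'
          have hcomb : ((lam - x) / (lam - ε)) • ε + ((x - ε) / (lam - ε)) • lam = x := by
            simp only [smul_eq_mul]
            field_simp
            ring
          have hcc := hconc.2 hεT hlamIn ha hb hab
          rw [hcomb] at hcc
          simp only [smul_eq_mul] at hcc
          have hfε := hnonneg ε hεT
          have hmul : f lam * ((x - ε) / (lam - ε)) = (x - ε) / (lam - ε) * f lam := by ring
          rw [hmul]
          nlinarith [mul_nonneg ha hfε]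
        have hc : ContinuousAt (fun ε : ℝ => f lam * ((x - ε) / (lam - ε))) 0 := by
          apply ContinuousAt.mul continuousAt_const
          apply ContinuousAt.div (by fun_prop) (by fun_prop)
          simpa using hlam.ne'
        have h2 : Filter.Tendsto (fun ε : ℝ => f lam * ((x - ε) / (lam - ε)))
            (nhdsWithin 0 (Set.Ioi (0:ℝ))) (nhds (f lam * (x / lam))) := by
          have h := hc.continuousWithinAt (s := Set.Ioi (0:ℝ))
          simpa [ContinuousWithinAt] using h
        exact le_of_tendsto h2 h1
    have h0 : 0 ≤ f lam * (x / lam) :=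
      mul_nonneg hfl (div_nonneg hx.1.le hlam.le)
    calc f lam ^ n / lam ^ n * x ^ n = (f lam * (x / lam)) ^ n := by
          rw [mul_pow, div_pow]; ring
      _ ≤ f x ^ n := pow_le_pow_left₀ h0 hfx n
  -- continuity / integrability
  have hsub : Set.Ioc (0:ℝ) lam ⊆ Set.Ioo (0:ℝ) T := fun y hy =>
    ⟨hy.1, lt_of_le_of_lt hy.2 hlamT⟩
  have hcont : ContinuousOn (fun x => f x ^ n) (Set.Ioc (0:ℝ) lam) :=
    ((hconc.continuousOn isOpen_Ioo).mono hsub).pow n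
  -- upper bound for f on Ioc 0 lam
  set m : ℝ := (lam + T) / 2 with hm
  have hmIn : m ∈ Set.Ioo (0:ℝ) T := ⟨by positivity, by simp only [hm]; linarith⟩
  have hmlam : lam < m := by simp only [hm]; linarith
  set M : ℝ := f lam * (m / (m - lam)) with hM
  have hbd : ∀ x ∈ Set.Ioc (0:ℝ) lam, f x ≤ M := by
    intro x hx
    have hxT : x ∈ Set.Ioo (0:ℝ) T := hsub hx
    have hd : (0:ℝ) < m - x := by linarith [hx.2]
    have hdl : (0:ℝ) < m - lam := by linarith
    have ha : 0 ≤ (m - lam) / (m - x) := (div_pos hdl hd).le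
    have hb : 0 ≤ (lam - x) / (m - x) := div_nonneg (by linarith [hx.2]) hd.le
    have hab : (m - lam) / (m - x) + (lam - x) / (m - x) = 1 := by field_simp; ring
    have hne : m - x ≠ 0 := hd.ne'
    have hcomb : ((m - lam) / (m - x)) • x + ((lam - x) / (m - x)) • m = lam := by
      simp only [smul_eq_mul]; field_simp; ring
    have hcc := hconc.2 hxT hmIn ha hb hab
    rw [hcomb] at hcc
    simp only [smul_eq_mul] at hcc
    have hfm := hnonneg m hmIn
    have h1 : (m - lam) / (m - x) * f x ≤ f lam := by
      nlinarith [mul_nonneg hb hfm]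
    rw [div_mul_eq_mul_div, div_le_iff₀ hd] at h1
    have hMeq : M = f lam * m / (m - lam) := by rw [hM]; ring
    rw [hMeq, le_div_iff₀ hdl]
    nlinarith [mul_nonneg hfl hx.1.le]
  have hInt : IntegrableOn (fun x => f x ^ n) (Set.Ioc (0:ℝ) lam) volume := by
    refine ⟨hcont.aestronglyMeasurable measurableSet_Ioc,
      HasFiniteIntegral.restrict_of_bounded (C := M ^ n) measure_Ioc_lt_top ?_⟩
    rw [ae_restrict_iff' measurableSet_Ioc]
    filter_upwards with x hx
    have h0 : 0 ≤ f x := hnonneg x (hsub hx)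
    rw [Real.norm_eq_abs, abs_of_nonneg (pow_nonneg h0 n)]
    exact pow_le_pow_left₀ h0 (hbd x hx) n
  have hIntg : IntegrableOn (fun x => f lam ^ n / lam ^ n * x ^ n)
      (Set.Ioc (0:ℝ) lam) volume :=
    ((continuous_const.mul (continuous_pow n)).integrableOn_Ioc)
  rw [intervalIntegral.integral_of_le hlam.le]
  have hval : (∫ x in Set.Ioc (0:ℝ) lam, f lam ^ n / lam ^ n * x ^ n)
      = f lam ^ n * lam / ((n : ℝ) + 1) := by
    rw [← intervalIntegral.integral_of_le hlam.le,
      intervalIntegral.integral_const_mul, integral_pow]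
    have hln : lam ^ n ≠ 0 := pow_ne_zero n hlam.ne'
    have hn1 : ((n : ℝ) + 1) ≠ 0 := by positivity
    field_simp
    ring
  rw [← hval]
  exact setIntegral_mono_on hIntg hInt measurableSet_Ioc key
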